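/- Assume 0 < λ < 1 and 1 < γ < 3. Let P₅ := (V₅, C₅) with V₅ := 2/(γ−3) and C₅ := (γ−1)/(3−γ), and let F_V, F_C, G_V, G_C denote the first-order partial derivatives of F and G evaluated at P₅. Then: (i) the Wronskian W := F_C·G_V − F_V·G_C is strictly positive; (ii) F_C + G_V < 0; (iii) the discriminant satisfies (F_C + G_V)² − 4W = C₅²·(2 + (ℓ−3)(1−λ))² > 0; and (iv) setting R := C₅·(2 + (ℓ−3)(1−λ)) (the positive square root of the discriminant), the primary and secondary slopes L₁ := (F_C − G_V + R)/(2G_C) and L₂ := (F_C − G_V − R)/(2G_C) satisfy L₁ = −(2ℓ + (ℓ−1)²(1−λ))/(2ℓ(1 + (ℓ−1)(1−λ))), L₂ = −ℓ^{−1}, and the chain of inequalities −F_V/F_C < −1 < −G_V/G_C < L₁ < −ℓ^{−1}. -/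

import Mathlib

noncomputable def ell (γ : ℝ) : ℝ := 2 / (γ - 1)
noncomputable def Vstar (γ lam : ℝ) : ℝ := ell γ * (1 - lam)
noncomputable def k1 (γ lam : ℝ) : ℝ := (1 / ell γ - 1) * (lam - 1)
noncomputable def k0 (γ lam : ℝ) : ℝ := (lam - 1) / ell γ
noncomputable def Dfun (V C : ℝ) : ℝ := (1 + V) ^ 2 - C ^ 2
noncomputable def Gfun (γ lam V C : ℝ) : ℝ :=
  C ^ 2 * (V - Vstar γ lam) - V * (1 + V) * (lam + V)
noncomputable def Ffun (γ lam V C : ℝ) : ℝ :=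
  C * (C ^ 2 - (1 + V) ^ 2 + k1 γ lam * (1 + V) - k0 γ lam)

section Aux

variable (c m : ℝ)

lemma aux1 (hc : 0 < c) (hm0 : 0 < m) : 0 < 2 * m * c * (2 * c + m) := by
  have h : 0 < 2 * c + m := by linarith
  nlinarith [mul_pos (mul_pos hm0 hc) h]

lemma aux2 (hc : 0 < c) (hm0 : 0 < m) : -(2 * c + m * (1 + 2 * c)) < 0 := by
  nlinarith [mul_pos hm0 (show (0:ℝ) < 1 + 2 * c by linarith)]

lemma aux3 (hc : 0 < c) (hm0 : 0 < m) (hm1 : m < 1) : 0 < 2 * c + m * (1 - 2 * c) := by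
  nlinarith [mul_pos hc (show (0:ℝ) < 1 - m by linarith)]

lemma aux4 (hc : 0 < c) (hm0 : 0 < m) : -(2 * (c + 1) * (c + m)) < 0 := by
  nlinarith [mul_pos (show (0:ℝ) < c + 1 by linarith) (show (0:ℝ) < c + m by linarith)]

lemma auxDpos (hc : 0 < c) (hm0 : 0 < m) : 0 < 2 * (c + 1) * (c + m) := by
  nlinarith [mul_pos (show (0:ℝ) < c + 1 by linarith) (show (0:ℝ) < c + m by linarith)]

lemma auxL1 (hc : 0 < c) (hm0 : 0 < m) :
    (2 * c ^ 2 - -(2 * c ^ 2 + 2 * c + m * (1 + 2 * c)) + (2 * c + m * (1 - 2 * c)))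
      / (2 * -(2 * (c + 1) * (c + m)))
    = -((2 * c ^ 2 + 2 * c + m) / (2 * (c + 1) * (c + m))) := by
  have hD := auxDpos c m hc hm0
  rw [mul_neg, div_neg, neg_inj,
    div_eq_div_iff (by positivity) (ne_of_gt hD)]
  ring

lemma auxL2 (hc : 0 < c) (hm0 : 0 < m) :
    (2 * c ^ 2 - -(2 * c ^ 2 + 2 * c + m * (1 + 2 * c)) - (2 * c + m * (1 - 2 * c)))
      / (2 * -(2 * (c + 1) * (c + m)))
    = -((c + 1) / c)⁻¹ := by
  have hD := auxDpos c m hc hm0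
  rw [mul_neg, div_neg, inv_div, neg_inj,
    div_eq_div_iff (by positivity) (by linarith : c + 1 ≠ 0)]
  ring

lemma auxL1form (hc : 0 < c) (hm0 : 0 < m) :
    -((2 * c ^ 2 + 2 * c + m) / (2 * (c + 1) * (c + m)))
    = -(2 * ((c + 1) / c) + ((c + 1) / c - 1) ^ 2 * m)
        / (2 * ((c + 1) / c) * (1 + ((c + 1) / c - 1) * m)) := by
  have h1 : (0:ℝ) < c + 1 := by linarith
  have h2 : (0:ℝ) < c + m := by linarith
  have hcne : c ≠ 0 := ne_of_gt hc
  have h3 : c + m * (c + 1 - c) ≠ 0 := by rw [add_sub_cancel_left, mul_one]; linarith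
  field_simp
  ring

lemma auxI1 (hc : 0 < c) (hm0 : 0 < m) :
    -(2 * c ^ 2 + m * c / (c + 1)) / (2 * c ^ 2) < -1 := by
  have h1 : (0:ℝ) < c + 1 := by linarith
  rw [div_lt_iff₀ (by positivity)]
  have h : 0 < m * c / (c + 1) := by positivity
  linarith

lemma auxI2 (hc : 0 < c) (hm0 : 0 < m) :
    -1 < -((2 * c ^ 2 + 2 * c + m * (1 + 2 * c)) / (2 * (c + 1) * (c + m))) := by
  have hD := auxDpos c m hc hm0
  rw [neg_lt_neg_iff, div_lt_one hD]
  nlinarith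

lemma auxI3 (hc : 0 < c) (hm0 : 0 < m) :
    -((2 * c ^ 2 + 2 * c + m * (1 + 2 * c)) / (2 * (c + 1) * (c + m)))
    < -((2 * c ^ 2 + 2 * c + m) / (2 * (c + 1) * (c + m))) := by
  have hD := auxDpos c m hc hm0
  rw [neg_lt_neg_iff, div_lt_div_iff₀ hD hD]
  nlinarith [mul_pos hm0 hc]

lemma auxI4 (hc : 0 < c) (hm0 : 0 < m) (hm1 : m < 1) :
    -((2 * c ^ 2 + 2 * c + m) / (2 * (c + 1) * (c + m))) < -((c + 1) / c)⁻¹ := by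
  have hD := auxDpos c m hc hm0
  have h1 : (0:ℝ) < c + 1 := by linarith
  rw [inv_div, neg_lt_neg_iff, div_lt_div_iff₀ h1 hD]
  nlinarith [mul_pos hc (show (0:ℝ) < 1 - m by linarith)]

end Aux

set_option maxHeartbeats 800000 in
/-- Wronskian, discriminant and primary/secondary slopes of the
linearization at `P₅` when `0 < λ < 1` and `1 < γ < 3`. -/
theorem stmt_10 (γ lam : ℝ) (hγ1 : 1 < γ) (hγ3 : γ < 3)
    (hlam0 : 0 < lam) (hlam1 : lam < 1) :
    let V5 : ℝ := 2 / (γ - 3)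
    let C5 : ℝ := (γ - 1) / (3 - γ)
    let FV : ℝ := deriv (fun V => Ffun γ lam V C5) V5
    let FC : ℝ := deriv (fun C => Ffun γ lam V5 C) C5
    let GV : ℝ := deriv (fun V => Gfun γ lam V C5) V5
    let GC : ℝ := deriv (fun C => Gfun γ lam V5 C) C5
    let W : ℝ := FC * GV - FV * GC
    let R : ℝ := C5 * (2 + (ell γ - 3) * (1 - lam))
    let L1 : ℝ := (FC - GV + R) / (2 * GC)
    let L2 : ℝ := (FC - GV - R) / (2 * GC)
    0 < W ∧
    FC + GV < 0 ∧
    (FC + GV) ^ 2 - 4 * W = C5 ^ 2 * (2 + (ell γ - 3) * (1 - lam)) ^ 2 ∧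
    0 < (FC + GV) ^ 2 - 4 * W ∧
    0 < R ∧ R ^ 2 = (FC + GV) ^ 2 - 4 * W ∧
    L1 = -(2 * ell γ + (ell γ - 1) ^ 2 * (1 - lam))
          / (2 * ell γ * (1 + (ell γ - 1) * (1 - lam))) ∧
    L2 = -(ell γ)⁻¹ ∧
    -FV / FC < -1 ∧ -1 < -GV / GC ∧ -GV / GC < L1 ∧ L1 < -(ell γ)⁻¹ := by
  intro V5 C5 FV FC GV GC W R L1 L2
  have h1 : (0:ℝ) < γ - 1 := by linarith
  have h3 : (0:ℝ) < 3 - γ := by linarith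
  have h1ne : γ - 1 ≠ 0 := ne_of_gt h1
  have h3ne : (3:ℝ) - γ ≠ 0 := ne_of_gt h3
  have h31ne : γ - 3 ≠ 0 := by intro h; apply h3ne; linarith
  have hc : 0 < C5 := div_pos h1 h3
  have hcne : C5 ≠ 0 := ne_of_gt hc
  have hc1 : (0:ℝ) < C5 + 1 := by linarith
  have hc1ne : C5 + 1 ≠ 0 := ne_of_gt hc1
  have hμ : 0 < 1 - lam := by linarith
  have hμ1 : 1 - lam < 1 := by linarith
  have hcμ : 0 < C5 + (1 - lam) := by linarith
  have hcμne : C5 + (1 - lam) ≠ 0 := ne_of_gt hcμ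
  have hC5def : C5 = (γ - 1) / (3 - γ) := rfl
  have hV5 : V5 = -(1 + C5) := by
    show (2:ℝ)/(γ-3) = -(1 + (γ-1)/(3-γ))
    field_simp
    ring
  have hell : ell γ = (C5 + 1) / C5 := by
    show 2/(γ-1) = _
    rw [hC5def]
    field_simp
    norm_num
  have hk1 : k1 γ lam = (1 - lam) / (C5 + 1) := by
    show (1 / (2/(γ-1)) - 1) * (lam - 1) = _
    rw [hC5def]
    field_simp
    ring
  have hk0 : k0 γ lam = -((1 - lam) * C5 / (C5 + 1)) := by
    show (lam - 1)/(2/(γ-1)) = _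
    rw [hC5def]
    field_simp
    ring
  have hVs : Vstar γ lam = (C5 + 1) * (1 - lam) / C5 := by
    show 2/(γ-1) * (1 - lam) = _
    rw [hC5def]
    field_simp
    ring
  -- derivatives
  have hF1 : HasDerivAt (fun V : ℝ => 1 + V) 1 V5 := by
    simpa using (hasDerivAt_id V5).const_add 1
  have hF2 : HasDerivAt (fun V : ℝ => (1 + V) ^ 2) (2 * (1 + V5)) V5 := by
    simpa using hF1.fun_pow 2
  have hF3 : HasDerivAt
      (fun V : ℝ => C5 ^ 2 - (1 + V) ^ 2 + k1 γ lam * (1 + V) - k0 γ lam)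
      (k1 γ lam - 2 * (1 + V5)) V5 := by
    have h := (((hasDerivAt_const V5 (C5 ^ 2)).fun_sub hF2).fun_add
      (hF1.const_mul (k1 γ lam))).sub_const (k0 γ lam)
    exact h.congr_deriv (by ring)
  have eFVraw : FV = C5 * (k1 γ lam - 2 * (1 + V5)) := (hF3.const_mul C5).deriv
  have eFV : FV = 2 * C5 ^ 2 + (1 - lam) * C5 / (C5 + 1) := by
    rw [eFVraw, hk1, hV5]
    field_simp
    ring
  have hid : HasDerivAt (fun C : ℝ => C) 1 C5 := hasDerivAt_id C5
  have hsq : HasDerivAt (fun C : ℝ => C ^ 2) (2 * C5) C5 := by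
    simpa using hid.fun_pow 2
  have hin : HasDerivAt
      (fun C : ℝ => C ^ 2 - (1 + V5) ^ 2 + k1 γ lam * (1 + V5) - k0 γ lam)
      (2 * C5) C5 := ((hsq.sub_const _).add_const _).sub_const _
  have eFCraw : FC =
      1 * (C5 ^ 2 - (1 + V5) ^ 2 + k1 γ lam * (1 + V5) - k0 γ lam) + C5 * (2 * C5) :=
    (hid.mul hin).deriv
  have eFC : FC = 2 * C5 ^ 2 := by
    rw [eFCraw, hk1, hk0, hV5]
    field_simp
    ring
  have hGA : HasDerivAt (fun V : ℝ => C5 ^ 2 * (V - Vstar γ lam)) (C5 ^ 2) V5 := by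
    simpa using ((hasDerivAt_id V5).sub_const (Vstar γ lam)).const_mul (C5 ^ 2)
  have hGl : HasDerivAt (fun V : ℝ => lam + V) 1 V5 := by
    simpa using (hasDerivAt_id V5).const_add lam
  have hGid : HasDerivAt (fun V : ℝ => V) 1 V5 := hasDerivAt_id V5
  have hGB : HasDerivAt (fun V : ℝ => V * (1 + V) * (lam + V))
      ((1 * (1 + V5) + V5 * 1) * (lam + V5) + V5 * (1 + V5) * 1) V5 :=
    (hGid.mul hF1).mul hGl
  have eGVraw : GV =
      C5 ^ 2 - ((1 * (1 + V5) + V5 * 1) * (lam + V5) + V5 * (1 + V5) * 1) :=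
    (hGA.sub hGB).deriv
  have eGV : GV = -(2 * C5 ^ 2 + 2 * C5 + (1 - lam) * (1 + 2 * C5)) := by
    rw [eGVraw, hV5]; ring
  have eGCraw : GC = 2 * C5 * (V5 - Vstar γ lam) :=
    ((hsq.mul_const (V5 - Vstar γ lam)).sub_const (V5 * (1 + V5) * (lam + V5))).deriv
  have eGC : GC = -(2 * (C5 + 1) * (C5 + (1 - lam))) := by
    rw [eGCraw, hVs, hV5]
    field_simp
    ring
  -- combined quantities
  have eW : W = 2 * (1 - lam) * C5 * (2 * C5 + (1 - lam)) := by
    show FC * GV - FV * GC = _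
    rw [eFC, eGV, eFV, eGC]
    field_simp
    ring
  have eT : FC + GV = -(2 * C5 + (1 - lam) * (1 + 2 * C5)) := by
    rw [eFC, eGV]; ring
  have eR : R = 2 * C5 + (1 - lam) * (1 - 2 * C5) := by
    show C5 * (2 + (ell γ - 3) * (1 - lam)) = _
    rw [hell]
    field_simp
    ring
  have hdisc : (FC + GV) ^ 2 - 4 * W = C5 ^ 2 * (2 + (ell γ - 3) * (1 - lam)) ^ 2 := by
    have h : C5 ^ 2 * (2 + (ell γ - 3) * (1 - lam)) ^ 2
        = (2 * C5 + (1 - lam) * (1 - 2 * C5)) ^ 2 := by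
      rw [hell]; field_simp; ring
    rw [eT, eW, h]; ring
  have hRpos : 0 < R := by
    rw [eR]; exact aux3 C5 (1 - lam) hc hμ hμ1
  have hR2 : R ^ 2 = (FC + GV) ^ 2 - 4 * W := by
    rw [eR, eT, eW]; ring
  have hGCneg : GC < 0 := by
    rw [eGC]; exact aux4 C5 (1 - lam) hc hμ
  have hL1c : L1 = -((2 * C5 ^ 2 + 2 * C5 + (1 - lam)) / (2 * (C5 + 1) * (C5 + (1 - lam)))) := by
    show (FC - GV + R) / (2 * GC) = _
    rw [eFC, eGV, eR, eGC]
    exact auxL1 C5 (1 - lam) hc hμ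
  have hq : -GV / GC = -((2 * C5 ^ 2 + 2 * C5 + (1 - lam) * (1 + 2 * C5))
      / (2 * (C5 + 1) * (C5 + (1 - lam)))) := by
    rw [eGV, eGC, neg_neg, div_neg]
  refine ⟨?_, ?_, hdisc, ?_, hRpos, hR2, ?_, ?_, ?_, ?_, ?_, ?_⟩
  · rw [eW]; exact aux1 C5 (1 - lam) hc hμ
  · rw [eT]; exact aux2 C5 (1 - lam) hc hμ
  · rw [← hR2]; exact pow_pos hRpos 2
  · rw [hL1c, hell]; exact auxL1form C5 (1 - lam) hc hμ
  · show (FC - GV - R) / (2 * GC) = -(ell γ)⁻¹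
    rw [eFC, eGV, eR, eGC, hell]
    exact auxL2 C5 (1 - lam) hc hμ
  · rw [eFV, eFC]; exact auxI1 C5 (1 - lam) hc hμ
  · rw [hq]; exact auxI2 C5 (1 - lam) hc hμ
  · rw [hq, hL1c]; exact auxI3 C5 (1 - lam) hc hμ
  · rw [hL1c, hell]; exact auxI4 C5 (1 - lam) hc hμ hμ1
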